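/- Let q ≥ 2, g ≥ 1 and h ≥ 1 be integers. For all u, v ∈ ℂ with |u| < 1/q² and |v| < 1/q, the double series Σ_{n = 2g−1}^{∞} Σ_{m = 0}^{∞} [h(q^{n−g+1} − 1)/(q − 1)]·[h(q^{m+n−g+1} − 1)/(q − 1)]·u^n v^m converges absolutely and equals (h/(q−1))²·[ q^{2g}/((1 − qv)(1 − q²u)) − q^g/((1 − qv)(1 − qu)) − q^g/((1 − v)(1 − qu)) + 1/((1 − v)(1 − u)) ]·u^{2g−1}. -/

import Mathlib

/-- Tail geometric series indicator version. -/
lemma geom_tail_hasSum (x : ℂ) (hx : ‖x‖ < 1) (N : ℕ) :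
    HasSum (fun n : ℕ => if N ≤ n then x ^ n else 0) (x ^ N * (1 - x)⁻¹) := by
  have h0 : HasSum (fun n : ℕ => x ^ N * x ^ n) (x ^ N * (1 - x)⁻¹) :=
    (hasSum_geometric_of_norm_lt_one hx).mul_left _
  have h1 : HasSum (fun n : ℕ => (if N ≤ n + N then x ^ (n + N) else 0))
      (x ^ N * (1 - x)⁻¹) := by
    refine h0.congr_fun fun n => ?_
    rw [if_pos (Nat.le_add_left _ _), pow_add, mul_comm]
  have := (hasSum_nat_add_iff (f := fun n : ℕ => if N ≤ n then x ^ n else 0) N).mp h1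
  have hz : ∑ n ∈ Finset.range N, (if N ≤ n then x ^ n else 0) = 0 := by
    refine Finset.sum_eq_zero fun i hi => ?_
    have : i < N := Finset.mem_range.mp hi
    rw [if_neg (by omega)]
  simpa [hz] using this

lemma geom_tail_summable_norm (x : ℂ) (hx : ‖x‖ < 1) (N : ℕ) :
    Summable (fun n : ℕ => ‖if N ≤ n then x ^ n else 0‖) := by
  refine Summable.of_nonneg_of_le (fun n => norm_nonneg _) (fun n => ?_)
    (summable_geometric_of_lt_one (norm_nonneg x) hx)
  split <;> simp [norm_pow]

lemma geom2_summable_norm (x y : ℂ) (hx : ‖x‖ < 1) (hy : ‖y‖ < 1) (N : ℕ) :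
    Summable (fun p : ℕ × ℕ => ‖if N ≤ p.1 then x ^ p.1 * y ^ p.2 else 0‖) := by
  have := (geom_tail_summable_norm x hx N).mul_norm
    ((summable_geometric_of_norm_lt_one hy).norm)
  refine this.congr fun p => ?_
  by_cases h : N ≤ p.1 <;> simp [h]

lemma geom2_hasSum (x y : ℂ) (hx : ‖x‖ < 1) (hy : ‖y‖ < 1) (N : ℕ) :
    HasSum (fun p : ℕ × ℕ => if N ≤ p.1 then x ^ p.1 * y ^ p.2 else 0)
      (x ^ N * (1 - x)⁻¹ * (1 - y)⁻¹) := by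
  have hmul := (geom_tail_hasSum x hx N).mul (hasSum_geometric_of_norm_lt_one hy)
    ((geom2_summable_norm x y hx hy N).of_norm.congr fun p => by
      by_cases h : N ≤ p.1 <;> simp [h])
  refine hmul.congr_fun fun p => ?_
  by_cases h : N ≤ p.1 <;> simp [h]

set_option maxHeartbeats 1000000

/-- For integers `q ≥ 2`, `g ≥ 1`, `h ≥ 1` and `u, v ∈ ℂ` with
`|u| < 1/q²`, `|v| < 1/q`, the double series
`Σ_{n ≥ 2g−1} Σ_{m ≥ 0} [h(q^{n−g+1}−1)/(q−1)]·[h(q^{m+n−g+1}−1)/(q−1)]·u^n v^m`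
converges absolutely to
`(h/(q−1))²·[q^{2g}/((1−qv)(1−q²u)) − q^g/((1−qv)(1−qu)) − q^g/((1−v)(1−qu))
+ 1/((1−v)(1−u))]·u^{2g−1}`. -/
theorem effective_divisor_double_tail_series
    (q g h : ℕ) (hq : 2 ≤ q) (hg : 1 ≤ g) (hh : 1 ≤ h)
    (u v : ℂ) (hu : ‖u‖ < 1 / (q : ℝ) ^ 2) (hv : ‖v‖ < 1 / q) :
    Summable (fun p : ℕ × ℕ =>
      ‖if 2 * g - 1 ≤ p.1 then
          ((h : ℂ) * ((q : ℂ) ^ ((p.1 : ℤ) - (g : ℤ) + 1) - 1) / ((q : ℂ) - 1)) *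
          ((h : ℂ) * ((q : ℂ) ^ ((p.2 : ℤ) + (p.1 : ℤ) - (g : ℤ) + 1) - 1) / ((q : ℂ) - 1)) *
          u ^ p.1 * v ^ p.2
        else 0‖) ∧
    HasSum (fun p : ℕ × ℕ =>
        if 2 * g - 1 ≤ p.1 then
          ((h : ℂ) * ((q : ℂ) ^ ((p.1 : ℤ) - (g : ℤ) + 1) - 1) / ((q : ℂ) - 1)) *
          ((h : ℂ) * ((q : ℂ) ^ ((p.2 : ℤ) + (p.1 : ℤ) - (g : ℤ) + 1) - 1) / ((q : ℂ) - 1)) *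
          u ^ p.1 * v ^ p.2
        else 0)
      (((h : ℂ) / ((q : ℂ) - 1)) ^ 2 *
        ((q : ℂ) ^ (2 * g) / ((1 - (q : ℂ) * v) * (1 - (q : ℂ) ^ 2 * u)) -
          (q : ℂ) ^ g / ((1 - (q : ℂ) * v) * (1 - (q : ℂ) * u)) -
          (q : ℂ) ^ g / ((1 - v) * (1 - (q : ℂ) * u)) +
          1 / ((1 - v) * (1 - u))) * u ^ (2 * g - 1)) := by
  set N := 2 * g - 1 with hN
  set Q : ℂ := (q : ℂ) with hQdef
  have hqR1 : (1 : ℝ) < (q : ℝ) := by exact_mod_cast Nat.lt_of_lt_of_le one_lt_two hq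
  have hqR0 : (0 : ℝ) < (q : ℝ) := by linarith
  have hQ0 : Q ≠ 0 := by
    simp only [hQdef, Ne, Nat.cast_eq_zero]; omega
  have hQ1 : Q - 1 ≠ 0 := by
    rw [sub_ne_zero, hQdef]
    have : ((q : ℂ)) ≠ ((1 : ℕ) : ℂ) := Nat.cast_injective.ne (by omega)
    simpa using this
  -- norms
  have hnu : ‖u‖ < 1 / (q : ℝ) ^ 2 := hu
  have hnv : ‖v‖ < 1 / (q : ℝ) := hv
  have hQn : ‖Q‖ = (q : ℝ) := Complex.norm_natCast q
  have h1 : ‖Q ^ 2 * u‖ < 1 := by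
    rw [norm_mul, norm_pow, hQn]
    calc (q : ℝ) ^ 2 * ‖u‖ < (q : ℝ) ^ 2 * (1 / (q : ℝ) ^ 2) :=
          mul_lt_mul_of_pos_left hnu (by positivity)
    _ = 1 := by field_simp
  have h2 : ‖Q * u‖ < 1 := by
    rw [norm_mul, hQn]
    calc (q : ℝ) * ‖u‖ < (q : ℝ) * (1 / (q : ℝ) ^ 2) := mul_lt_mul_of_pos_left hnu hqR0
    _ = 1 / (q : ℝ) := by field_simp
    _ < 1 := by rw [div_lt_one hqR0]; linarith
  have h3 : ‖u‖ < 1 := by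
    calc ‖u‖ < 1 / (q : ℝ) ^ 2 := hnu
    _ ≤ 1 := by rw [div_le_one (by positivity)]; nlinarith
  have h4 : ‖Q * v‖ < 1 := by
    rw [norm_mul, hQn]
    calc (q : ℝ) * ‖v‖ < (q : ℝ) * (1 / (q : ℝ)) := mul_lt_mul_of_pos_left hnv hqR0
    _ = 1 := by field_simp
  have h5 : ‖v‖ < 1 := by
    calc ‖v‖ < 1 / (q : ℝ) := hnv
    _ ≤ 1 := by rw [div_le_one hqR0]; linarith
  -- constants
  set C : ℂ := ((h : ℂ) / (Q - 1)) ^ 2 with hC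
  set B : ℂ := Q ^ (1 - (g : ℤ)) with hB
  set A : ℂ := Q ^ (2 - 2 * (g : ℤ)) with hA
  have hAB : A = B ^ 2 := by
    rw [hA, hB, show 2 - 2 * (g : ℤ) = (1 - (g : ℤ)) + (1 - (g : ℤ)) by ring,
      zpow_add₀ hQ0, sq]
  -- the four basic functions
  set F1 : ℕ × ℕ → ℂ := fun p => if N ≤ p.1 then (Q ^ 2 * u) ^ p.1 * (Q * v) ^ p.2 else 0
  set F2 : ℕ × ℕ → ℂ := fun p => if N ≤ p.1 then (Q * u) ^ p.1 * v ^ p.2 else 0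
  set F3 : ℕ × ℕ → ℂ := fun p => if N ≤ p.1 then (Q * u) ^ p.1 * (Q * v) ^ p.2 else 0
  set F4 : ℕ × ℕ → ℂ := fun p => if N ≤ p.1 then u ^ p.1 * v ^ p.2 else 0
  -- pointwise identity
  have key : ∀ p : ℕ × ℕ,
      (if N ≤ p.1 then
          ((h : ℂ) * (Q ^ ((p.1 : ℤ) - (g : ℤ) + 1) - 1) / (Q - 1)) *
          ((h : ℂ) * (Q ^ ((p.2 : ℤ) + (p.1 : ℤ) - (g : ℤ) + 1) - 1) / (Q - 1)) *
          u ^ p.1 * v ^ p.2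
        else 0) =
      C * A * F1 p - C * B * F2 p - C * B * F3 p + C * F4 p := by
    rintro ⟨n, m⟩
    by_cases hn : N ≤ n
    · simp only [F1, F2, F3, F4, if_pos hn]
      have e1 : Q ^ ((n : ℤ) - (g : ℤ) + 1) = Q ^ n * B := by
        rw [hB, show (n : ℤ) - (g : ℤ) + 1 = (n : ℤ) + (1 - (g : ℤ)) by ring,
          zpow_add₀ hQ0, zpow_natCast]
      have e2 : Q ^ ((m : ℤ) + (n : ℤ) - (g : ℤ) + 1) = Q ^ m * (Q ^ n * B) := by
        rw [hB, show (m : ℤ) + (n : ℤ) - (g : ℤ) + 1 = (m : ℤ) + ((n : ℤ) + (1 - (g : ℤ)))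
          by ring, zpow_add₀ hQ0, zpow_add₀ hQ0, zpow_natCast, zpow_natCast]
      rw [e1, e2, hAB, hC]
      field_simp
      ring
    · simp only [F1, F2, F3, F4, if_neg hn]
      ring
  -- summability of norms
  have sn1 := geom2_summable_norm _ _ h1 h4 N
  have sn2 := geom2_summable_norm _ _ h2 h5 N
  have sn3 := geom2_summable_norm _ _ h2 h4 N
  have sn4 := geom2_summable_norm _ _ h3 h5 N
  have hsum_norm : Summable (fun p : ℕ × ℕ =>
      ‖if N ≤ p.1 then
          ((h : ℂ) * (Q ^ ((p.1 : ℤ) - (g : ℤ) + 1) - 1) / (Q - 1)) *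
          ((h : ℂ) * (Q ^ ((p.2 : ℤ) + (p.1 : ℤ) - (g : ℤ) + 1) - 1) / (Q - 1)) *
          u ^ p.1 * v ^ p.2
        else 0‖) := by
    refine Summable.of_nonneg_of_le (fun p => norm_nonneg _) (fun p => ?_)
      ((((sn1.mul_left ‖C * A‖).add (sn2.mul_left ‖C * B‖)).add
        (sn3.mul_left ‖C * B‖)).add (sn4.mul_left ‖C‖))
    rw [key p]
    calc ‖C * A * F1 p - C * B * F2 p - C * B * F3 p + C * F4 p‖
        ≤ ‖C * A * F1 p - C * B * F2 p - C * B * F3 p‖ + ‖C * F4 p‖ := norm_add_le _ _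
      _ ≤ ‖C * A * F1 p - C * B * F2 p‖ + ‖C * B * F3 p‖ + ‖C * F4 p‖ :=
          add_le_add (norm_sub_le _ _) le_rfl
      _ ≤ ‖C * A * F1 p‖ + ‖C * B * F2 p‖ + ‖C * B * F3 p‖ + ‖C * F4 p‖ :=
          add_le_add (add_le_add (norm_sub_le _ _) le_rfl) le_rfl
      _ = ‖C * A‖ * ‖F1 p‖ + ‖C * B‖ * ‖F2 p‖ + ‖C * B‖ * ‖F3 p‖ + ‖C‖ * ‖F4 p‖ := by
          simp only [norm_mul]
  refine ⟨hsum_norm, ?_⟩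
  -- HasSum
  have H1 := (geom2_hasSum _ _ h1 h4 N).mul_left (C * A)
  have H2 := (geom2_hasSum _ _ h2 h5 N).mul_left (C * B)
  have H3 := (geom2_hasSum _ _ h2 h4 N).mul_left (C * B)
  have H4 := (geom2_hasSum _ _ h3 h5 N).mul_left C
  have H := ((H1.sub H2).sub H3).add H4
  have Hf := H.congr_fun key
  -- nonvanishing denominators
  have one_sub_ne : ∀ x : ℂ, ‖x‖ < 1 → (1 : ℂ) - x ≠ 0 := by
    intro x hx hc
    rw [sub_eq_zero] at hc
    rw [← hc, norm_one] at hx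
    exact lt_irrefl 1 hx
  have d1 := one_sub_ne _ h1
  have d2 := one_sub_ne _ h2
  have d3 := one_sub_ne _ h3
  have d4 := one_sub_ne _ h4
  have d5 := one_sub_ne _ h5
  -- exponent identities
  have eA : A * (Q ^ 2) ^ N = Q ^ (2 * g) := by
    rw [hA, ← pow_mul, ← zpow_natCast Q (2 * N), ← zpow_add₀ hQ0,
      ← zpow_natCast Q (2 * g)]
    congr 1
    omega
  have eB : B * Q ^ N = Q ^ g := by
    rw [hB, ← zpow_natCast Q N, ← zpow_add₀ hQ0, ← zpow_natCast Q g]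
    congr 1
    omega
  have hval : C * A * ((Q ^ 2 * u) ^ N * (1 - Q ^ 2 * u)⁻¹ * (1 - Q * v)⁻¹) -
      C * B * ((Q * u) ^ N * (1 - Q * u)⁻¹ * (1 - v)⁻¹) -
      C * B * ((Q * u) ^ N * (1 - Q * u)⁻¹ * (1 - Q * v)⁻¹) +
      C * (u ^ N * (1 - u)⁻¹ * (1 - v)⁻¹) =
      C * (Q ^ (2 * g) / ((1 - Q * v) * (1 - Q ^ 2 * u)) -
        Q ^ g / ((1 - Q * v) * (1 - Q * u)) -
        Q ^ g / ((1 - v) * (1 - Q * u)) +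
        1 / ((1 - v) * (1 - u))) * u ^ N := by
    rw [← eA, ← eB, mul_pow, mul_pow]
    simp only [div_eq_mul_inv, mul_inv]
    ring
  exact hval ▸ Hf
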